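/- arXiv:2202.10209 — 2 statements merged into one kernel-verified Lean document; each statement's English description precedes it below -/
import Mathlib

section
/- If each of n local randomizers R_1,…,R_n provides ε-edge LDP, then the tuple (R_1,…,R_n) applied to the rows of the adjacency matrix of an undirected graph provides 2ε-relationship DP: for any two undirected graphs G, G' on n nodes differing in one edge and any tuple of outputs (s_1,…,s_n), Pr[(R_1(a_1),…,R_n(a_n))=(s_1,…,s_n)] ≤ e^{2ε} Pr[(R_1(a'_1),…,R_n(a'_n))=(s_1,…,s_n)], where a_i, a'_i are the i-th rows of the adjacency matrices of G, G'. -/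
open Real Finset

/-- Two neighbor lists differ in exactly one bit. -/
def DiffOne {n : ℕ} (a a' : Fin n → Bool) : Prop :=
  ∃ j, a j ≠ a' j ∧ ∀ k, k ≠ j → a k = a' k

/-- A local randomizer `R` (given by its output probability mass function)
provides ε-edge LDP. -/
def EdgeLDP {n : ℕ} {S : Type*} (ε : ℝ) (R : (Fin n → Bool) → S → ℝ) : Prop :=
  ∀ a a' : Fin n → Bool, DiffOne a a' → ∀ s : S, R a s ≤ exp ε * R a' s

/-- An adjacency matrix of an undirected graph: symmetric with zero diagonal. -/
def IsUndirectedAdj {n : ℕ} (A : Fin n → Fin n → Bool) : Prop :=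
  (∀ i j, A i j = A j i) ∧ (∀ i, A i i = false)

/-- `A` and `A'` differ in exactly one (undirected) edge. -/
def DiffOneEdge {n : ℕ} (A A' : Fin n → Fin n → Bool) : Prop :=
  ∃ i j, i ≠ j ∧ A i j ≠ A' i j ∧
    ∀ k l, (k, l) ≠ (i, j) → (k, l) ≠ (j, i) → A k l = A' k l

/-- If each local randomizer provides ε-edge LDP, then the tuple applied to the
rows of the adjacency matrix of an undirected graph provides 2ε-relationship DP. -/
theorem stmt_1 {n : ℕ} {S : Fin n → Type*} (ε : ℝ) (hε : 0 ≤ ε)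
    (R : ∀ i : Fin n, (Fin n → Bool) → S i → ℝ)
    (hnonneg : ∀ i a s, 0 ≤ R i a s)
    (hLDP : ∀ i, EdgeLDP ε (R i))
    (A A' : Fin n → Fin n → Bool)
    (hA : IsUndirectedAdj A) (hA' : IsUndirectedAdj A')
    (hdiff : DiffOneEdge A A')
    (s : ∀ i, S i) :
    ∏ i : Fin n, R i (A i) (s i) ≤ exp (2 * ε) * ∏ i : Fin n, R i (A' i) (s i) := by
  classical
  obtain ⟨i, j, hij, hne, hoth⟩ := hdiff
  have hrow : ∀ k, k ≠ i → k ≠ j → A k = A' k := by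
    intro k hki hkj
    funext l
    exact hoth k l (by simp [Prod.ext_iff, hki]) (by simp [Prod.ext_iff, hkj])
  have hdi : DiffOne (A i) (A' i) := by
    refine ⟨j, hne, fun l hl => ?_⟩
    exact hoth i l (by simp [Prod.ext_iff, hl]) (by simp [Prod.ext_iff, hij])
  have hdj : DiffOne (A j) (A' j) := by
    refine ⟨i, ?_, fun l hl => ?_⟩
    · rw [hA.1 j i, hA'.1 j i]; exact hne
    · exact hoth j l (by simp [Prod.ext_iff, Ne.symm hij]) (by simp [Prod.ext_iff, hl])
  have key : ∏ k : Fin n, R k (A k) (s k)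
      ≤ ∏ k : Fin n, (if k = i ∨ k = j then exp ε else 1) * R k (A' k) (s k) := by
    apply Finset.prod_le_prod
    · intro k _; exact hnonneg k _ _
    · intro k _
      by_cases hki : k = i
      · subst hki; simp only [if_pos (Or.inl rfl)]; exact hLDP k (A k) (A' k) hdi (s k)
      · by_cases hkj : k = j
        · subst hkj; rw [if_pos (Or.inr rfl)]; exact hLDP k (A k) (A' k) hdj (s k)
        · rw [hrow k hki hkj]; simp [hki, hkj]
  refine key.trans (le_of_eq ?_)
  rw [Finset.prod_mul_distrib]
  congr 1
  have h1 : ∀ k : Fin n, (if k = i ∨ k = j then exp ε else 1)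
      = if k ∈ ({i, j} : Finset (Fin n)) then exp ε else 1 := by
    intro k; simp
  simp only [h1]
  rw [Finset.prod_ite_mem, Finset.univ_inter, Finset.prod_const,
    Finset.card_insert_of_notMem (by simp [hij]), Finset.card_singleton,
    two_mul, exp_add, sq]
end

section
/- For the DPRR output distribution in (single-edge form): for each off-diagonal coordinate j, Pr[output bit = 1] = p·q if a_j = 1 and (1−p)·q if a_j = 0; consequently, for any fixed q ∈ (0,1] and p = e^{ε₂}/(e^{ε₂}+1), the per-bit likelihood ratio between inputs a_j = 1 and a_j = 0 satisfies max(pq/((1−p)q), (1−pq)/(1−(1−p)q)) ≤ e^{ε₂}. -/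
open Real

/-- Per-bit DPRR output distribution and likelihood-ratio bound: with
p = e^{ε₂}/(e^{ε₂}+1) and sampling probability q ∈ (0,1], the probability of
an output 1 is p·q on input bit 1 and (1−p)·q on input bit 0, and both
per-bit likelihood ratios pq/((1−p)q) and (1−pq)/(1−(1−p)q) are at most
e^{ε₂}. -/
theorem stmt_17 (ε₂ : ℝ) (hε₂ : 0 ≤ ε₂) (q : ℝ) (hq : 0 < q ∧ q ≤ 1)
    (p : ℝ) (hp : p = exp ε₂ / (exp ε₂ + 1)) :
    ((fun aj : Bool => (if aj then p else 1 - p) * q) true = p * q) ∧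
    ((fun aj : Bool => (if aj then p else 1 - p) * q) false = (1 - p) * q) ∧
    (p * q) / ((1 - p) * q) ≤ exp ε₂ ∧
    (1 - p * q) / (1 - (1 - p) * q) ≤ exp ε₂ := by
  obtain ⟨hq0, hq1⟩ := hq
  have hE : (1 : ℝ) ≤ exp ε₂ := by simpa using exp_le_exp.mpr hε₂
  have hE1 : (0 : ℝ) < exp ε₂ + 1 := by linarith
  have h1p : 0 < 1 - p := by
    rw [hp, sub_pos, div_lt_one hE1]; linarith
  have hp1 : 1 - p < 1 := by
    have : 0 < p := by rw [hp]; positivity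
    linarith
  have hden : 0 < 1 - (1 - p) * q := by nlinarith
  refine ⟨rfl, rfl, ?_, ?_⟩
  · rw [div_le_iff₀ (by positivity)]
    rw [hp]; field_simp; linarith
  · rw [div_le_iff₀ hden, hp]
    field_simp
    have h2 : 1 ≤ exp ε₂ * exp ε₂ := by nlinarith
    nlinarith
end
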